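/- Let V be a finite-dimensional complex vector space and A, B alternating bilinear forms on V. A subspace U ⊆ V is bi-Lagrangian with respect to the pencil {A + λB} if and only if U is bi-isotropic, admissible, and maximal with respect to inclusion among bi-isotropic admissible subspaces of V. -/

import Mathlib

open Module LinearMap

variable {V : Type*} [AddCommGroup V] [Module ℂ V]

/-- The skew-orthogonal complement of a subspace `U` with respect to a
bilinear form `C`. -/
noncomputable def orthComp (C : V →ₗ[ℂ] V →ₗ[ℂ] ℂ) (U : Submodule ℂ V) : Submodule ℂ V :=
  ⨅ u ∈ U, LinearMap.ker (C u)

/-- The rank of a bilinear form: the rank of the induced map `V → V*`. -/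
noncomputable def formRank (C : V →ₗ[ℂ] V →ₗ[ℂ] ℂ) : ℕ :=
  Module.finrank ℂ (LinearMap.range C)

/-- The member of the pencil `{A + λB : λ ∈ ℂ ∪ {∞}}` at `λ`; `none` is `λ = ∞`. -/
noncomputable def pencilForm (A B : V →ₗ[ℂ] V →ₗ[ℂ] ℂ) : Option ℂ → V →ₗ[ℂ] V →ₗ[ℂ] ℂ
  | none => B
  | some l => A + l • B

/-- The rank of the pencil: `max_{λ ∈ ℂ ∪ {∞}} rank (A + λB)`. -/
noncomputable def pencilRank (A B : V →ₗ[ℂ] V →ₗ[ℂ] ℂ) : ℕ :=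
  ⨆ l : Option ℂ, formRank (pencilForm A B l)

/-- A subspace `U` is bi-isotropic if both `A` and `B` vanish on `U × U`. -/
def biIsotropic (A B : V →ₗ[ℂ] V →ₗ[ℂ] ℂ) (U : Submodule ℂ V) : Prop :=
  ∀ u ∈ U, ∀ v ∈ U, A u v = 0 ∧ B u v = 0

/-- A subspace `U` is admissible if its skew-orthogonal complements w.r.t.
`A + λB` coincide for all but finitely many `λ ∈ ℂ`. -/
def IsAdmissible (A B : V →ₗ[ℂ] V →ₗ[ℂ] ℂ) (U : Submodule ℂ V) : Prop :=
  ∃ W : Submodule ℂ V, {l : ℂ | orthComp (A + l • B) U ≠ W}.Finite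

/-! ### Auxiliary material -/

open Polynomial in
private lemma eval_det_pencil' {m : ℕ} (M N : Matrix (Fin m) (Fin m) ℂ) (l : ℂ) :
    (((M.map Polynomial.C) + (X : ℂ[X]) • (N.map Polynomial.C)).det).eval l
      = (M + l • N).det := by
  have h : (((M.map Polynomial.C) + (X : ℂ[X]) • (N.map Polynomial.C)).det).eval l
      = (Polynomial.evalRingHom l)
        (((M.map Polynomial.C) + (X : ℂ[X]) • (N.map Polynomial.C)).det) := rfl
  rw [h, RingHom.map_det]
  congr 1
  ext i j
  simp [Matrix.map_apply, Matrix.add_apply, Matrix.smul_apply, smul_eq_mul]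
  ring

private lemma const_of_no_root' {p : Polynomial ℂ} (h : ∀ l : ℂ, p.eval l ≠ 0) (l : ℂ) :
    p.eval l = p.eval 0 := by
  have hdeg : p.degree = 0 := by
    by_contra hd
    obtain ⟨z, hz⟩ := Complex.isAlgClosed.exists_root p hd
    exact h z hz
  have hc := Polynomial.eq_C_of_degree_le_zero (le_of_eq hdeg)
  rw [hc]; simp

open Polynomial in
private lemma matKey' {m : ℕ} (hm : 1 ≤ m) (M N : Matrix (Fin m) (Fin m) ℂ) :
    ∃ a b : ℂ, ¬(a = 0 ∧ b = 0) ∧ (a • M + b • N).det = 0 := by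
  by_cases hM : M.det = 0
  · exact ⟨1, 0, by simp, by simpa using hM⟩
  by_cases hN : N.det = 0
  · exact ⟨0, 1, by simp, by simpa using hN⟩
  by_cases hproot : ∃ l : ℂ, (M + l • N).det = 0
  · obtain ⟨l, hl⟩ := hproot
    exact ⟨1, l, by simp, by simpa using hl⟩
  by_cases hqroot : ∃ l : ℂ, (N + l • M).det = 0
  · obtain ⟨l, hl⟩ := hqroot
    exact ⟨l, 1, by simp, by rw [add_comm]; simpa using hl⟩
  exfalso
  push_neg at hproot hqroot
  have hpc : ∀ l : ℂ, (M + l • N).det = M.det := by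
    intro l
    have h1 := const_of_no_root'
      (p := ((M.map Polynomial.C) + (X : ℂ[X]) • (N.map Polynomial.C)).det)
      (fun z => by rw [eval_det_pencil']; exact hproot z) l
    rw [eval_det_pencil', eval_det_pencil'] at h1
    simpa using h1
  have hqc : ∀ l : ℂ, (N + l • M).det = N.det := by
    intro l
    have h1 := const_of_no_root'
      (p := ((N.map Polynomial.C) + (X : ℂ[X]) • (M.map Polynomial.C)).det)
      (fun z => by rw [eval_det_pencil']; exact hqroot z) l
    rw [eval_det_pencil', eval_det_pencil'] at h1
    simpa using h1
  have h1 : N.det = M.det := by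
    have ha := hpc 1
    have hb := hqc 1
    rw [one_smul] at ha hb
    rw [← hb, add_comm, ha]
  have h2 : N.det = ((2:ℂ)⁻¹)^m * M.det := by
    have hq2 := hqc (2⁻¹ : ℂ)
    have hmat : N + (2⁻¹ : ℂ) • M = (2⁻¹ : ℂ) • (M + (2:ℂ) • N) := by
      rw [smul_add, smul_smul, add_comm]
      norm_num
    rw [hmat, Matrix.det_smul, hpc 2, Fintype.card_fin] at hq2
    exact hq2.symm
  rw [h1] at h2
  have h3 : ((2:ℂ)⁻¹)^m = 1 :=
    mul_right_cancel₀ hM (h2.symm.trans (one_mul M.det).symm)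
  have h4 : ‖((2:ℂ)⁻¹)^m‖ = 1 := by rw [h3]; simp
  rw [norm_pow, norm_inv, Complex.norm_two] at h4
  have : ((2:ℝ))⁻¹ ^ m < 1 := pow_lt_one₀ (by norm_num) (by norm_num) (by omega)
  rw [h4] at this
  exact lt_irrefl 1 this

private lemma det_zero_iff_ker' {X : Type*} [AddCommGroup X] [Module ℂ X]
    [FiniteDimensional ℂ X] (f : X →ₗ[ℂ] Module.Dual ℂ X)
    (e : Basis (Fin (finrank ℂ X)) ℂ X) :
    (∃ x ≠ 0, f x = 0) ↔ (LinearMap.toMatrix e e.dualBasis f).det = 0 := by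
  rw [← Matrix.exists_mulVec_eq_zero_iff]
  constructor
  · rintro ⟨x, hx, hfx⟩
    refine ⟨e.repr x, fun h => hx ?_, ?_⟩
    · have : e.repr x = 0 := Finsupp.coe_eq_zero.mp h
      simpa using congrArg e.repr.symm this
    · ext i
      rw [LinearMap.toMatrix_mulVec_repr]
      simp [hfx]
  · rintro ⟨v, hv, hmv⟩
    set x := e.repr.symm (Finsupp.equivFunOnFinite.symm v) with hxdef
    have hrepr : ⇑(e.repr x) = v := by
      simp [hxdef]
    refine ⟨x, fun h => hv (by rw [← hrepr, h]; simp), ?_⟩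
    have := congrArg (fun w => (LinearMap.toMatrix e e.dualBasis f).mulVec w) hrepr
    rw [LinearMap.toMatrix_mulVec_repr, hmv] at this
    have h2 : e.dualBasis.repr (f x) = 0 := Finsupp.coe_eq_zero.mp this
    simpa using congrArg e.dualBasis.repr.symm h2

private lemma keyLemma' {Q : Type*} [AddCommGroup Q] [Module ℂ Q] [FiniteDimensional ℂ Q]
    (hq : 1 ≤ finrank ℂ Q) (f g : Q →ₗ[ℂ] Module.Dual ℂ Q) :
    ∃ (a b : ℂ) (x : Q), ¬(a = 0 ∧ b = 0) ∧ x ≠ 0 ∧ (a • f + b • g) x = 0 := by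
  let e := Module.finBasis ℂ Q
  obtain ⟨a, b, hab, hdet⟩ := matKey' hq (LinearMap.toMatrix e e.dualBasis f)
    (LinearMap.toMatrix e e.dualBasis g)
  have htm : LinearMap.toMatrix e e.dualBasis (a • f + b • g)
      = a • LinearMap.toMatrix e e.dualBasis f + b • LinearMap.toMatrix e e.dualBasis g := by
    simp [map_add, map_smul]
  obtain ⟨x, hx, hfx⟩ := (det_zero_iff_ker' (a • f + b • g) e).mpr (by rw [htm]; exact hdet)
  exact ⟨a, b, x, hab, hx, hfx⟩

private lemma pencil_alt' {A B : V →ₗ[ℂ] V →ₗ[ℂ] ℂ} (hA : A.IsAlt) (hB : B.IsAlt) (l : ℂ) :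
    (A + l • B).IsAlt := fun x => by simp [hA x, hB x]

private lemma mem_orthComp' {C : V →ₗ[ℂ] V →ₗ[ℂ] ℂ} {U : Submodule ℂ V} {x : V} :
    x ∈ orthComp C U ↔ ∀ u ∈ U, C u x = 0 := by
  simp [orthComp, Submodule.mem_iInf, LinearMap.mem_ker]

private lemma orthComp_eq_ker' {C : V →ₗ[ℂ] V →ₗ[ℂ] ℂ} (hC : C.IsAlt) (U : Submodule ℂ V) :
    orthComp C U = LinearMap.ker
      ((U.subtype.dualMap : Module.Dual ℂ V →ₗ[ℂ] Module.Dual ℂ U) ∘ₗ C) := by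
  ext x
  rw [mem_orthComp', LinearMap.mem_ker]
  constructor
  · intro h
    ext u
    have h2 := h u u.2
    simp only [LinearMap.comp_apply, LinearMap.dualMap_apply, Submodule.subtype_apply,
      LinearMap.zero_apply]
    rw [← hC.neg _ x, h2, neg_zero]
  · intro h u hu
    have : (C x) u = 0 := by
      have := congrArg (fun φ => φ ⟨u, hu⟩) h
      simpa using this
    rw [← hC.neg x u, this, neg_zero]

private lemma finrank_ker_dualMap_subtype' [FiniteDimensional ℂ V] (U : Submodule ℂ V) :
    finrank ℂ (LinearMap.ker (U.subtype.dualMap : Module.Dual ℂ V →ₗ[ℂ] Module.Dual ℂ U))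
      + finrank ℂ U = finrank ℂ V := by
  have hsurj : Function.Surjective
      (U.subtype.dualMap : Module.Dual ℂ V →ₗ[ℂ] Module.Dual ℂ U) :=
    LinearMap.dualMap_surjective_of_injective U.injective_subtype
  have h1 := LinearMap.finrank_range_add_finrank_ker
    (U.subtype.dualMap : Module.Dual ℂ V →ₗ[ℂ] Module.Dual ℂ U)
  rw [LinearMap.range_eq_top.mpr hsurj] at h1
  rw [finrank_top, Subspace.dual_finrank_eq, Subspace.dual_finrank_eq] at h1
  omega

private lemma finrank_le_map_add_ker' {W₂ : Type*} [AddCommGroup W₂] [Module ℂ W₂]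
    [FiniteDimensional ℂ V] [FiniteDimensional ℂ W₂]
    (f : V →ₗ[ℂ] W₂) (P : Submodule ℂ V) :
    finrank ℂ P ≤ finrank ℂ (P.map f) + finrank ℂ (LinearMap.ker f) := by
  have h1 := LinearMap.finrank_range_add_finrank_ker (f.domRestrict P)
  have h2 : LinearMap.range (f.domRestrict P) = P.map f := by
    ext y
    simp [LinearMap.mem_range, Submodule.mem_map]
  have h3 : finrank ℂ (LinearMap.ker (f.domRestrict P)) ≤ finrank ℂ (LinearMap.ker f) := by
    apply LinearMap.finrank_le_finrank_of_injective
      (f := (P.subtype.comp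
        (LinearMap.ker (f.domRestrict P)).subtype).codRestrict (LinearMap.ker f) ?_) ?_
    · rintro ⟨⟨x, hxP⟩, hx⟩
      simpa [LinearMap.mem_ker] using hx
    · intro a b hab
      have : (a : V) = (b : V) := congrArg (fun z => ((z : ↥(LinearMap.ker f)) : V)) hab
      exact Subtype.ext (Subtype.ext this)
  rw [h2] at h1
  omega

private lemma transpose_rank' [FiniteDimensional ℂ V] {C : V →ₗ[ℂ] V →ₗ[ℂ] ℂ} (hC : C.IsAlt)
    (U : Submodule ℂ V) :
    finrank ℂ (LinearMap.range
        ((U.subtype.dualMap : Module.Dual ℂ V →ₗ[ℂ] Module.Dual ℂ U) ∘ₗ C))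
      = finrank ℂ (LinearMap.range ((C : V →ₗ[ℂ] Module.Dual ℂ V) ∘ₗ U.subtype)) := by
  set T : U →ₗ[ℂ] Module.Dual ℂ V := (C : V →ₗ[ℂ] Module.Dual ℂ V) ∘ₗ U.subtype with hT
  have hS : ((U.subtype.dualMap : Module.Dual ℂ V →ₗ[ℂ] Module.Dual ℂ U) ∘ₗ C)
      = -(T.dualMap ∘ₗ (Module.evalEquiv ℂ V).toLinearMap) := by
    ext v u
    simp only [LinearMap.comp_apply, LinearMap.dualMap_apply, LinearMap.neg_apply,
      LinearEquiv.coe_coe, Module.evalEquiv_apply, hT, Submodule.subtype_apply]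
    rw [← hC.neg _ v]
    rw [Module.Dual.eval_apply]
  rw [hS, LinearMap.range_neg, LinearMap.range_comp, LinearEquiv.range, Submodule.map_top]
  exact LinearMap.finrank_range_dualMap_eq_finrank_range T

section FinBad
variable [FiniteDimensional ℂ V]

/-- The restriction of a form to a subspace `S`, as a map `S →ₗ Dual S`. -/
private noncomputable def resForm (C : V →ₗ[ℂ] V →ₗ[ℂ] ℂ) (S : Submodule ℂ V) :
    S →ₗ[ℂ] Module.Dual ℂ S :=
  (S.subtype.dualMap : Module.Dual ℂ V →ₗ[ℂ] Module.Dual ℂ S) ∘ₗ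
    ((C : V →ₗ[ℂ] Module.Dual ℂ V) ∘ₗ S.subtype)

omit [FiniteDimensional ℂ V] in
private lemma resForm_apply (C : V →ₗ[ℂ] V →ₗ[ℂ] ℂ) (S : Submodule ℂ V) (x s : S) :
    resForm C S x s = C (x : V) (s : V) := rfl

omit [FiniteDimensional ℂ V] in
private lemma resForm_pencil (A B : V →ₗ[ℂ] V →ₗ[ℂ] ℂ) (S : Submodule ℂ V) (l : ℂ) :
    resForm (A + l • B) S = resForm A S + l • resForm B S := by
  ext x s
  simp [resForm_apply]

private lemma formRank_le_finrank (C : V →ₗ[ℂ] V →ₗ[ℂ] ℂ) : formRank C ≤ finrank ℂ V := by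
  have := Submodule.finrank_le (LinearMap.range (C : V →ₗ[ℂ] Module.Dual ℂ V))
  rwa [Subspace.dual_finrank_eq] at this

private lemma formRank_le_pencilRank (A B : V →ₗ[ℂ] V →ₗ[ℂ] ℂ) (d : Option ℂ) :
    formRank (pencilForm A B d) ≤ pencilRank A B :=
  le_ciSup (f := fun d => formRank (pencilForm A B d))
    ⟨finrank ℂ V, by rintro x ⟨d, rfl⟩; exact formRank_le_finrank _⟩ d

private lemma pencilRank_attained (A B : V →ₗ[ℂ] V →ₗ[ℂ] ℂ) :
    ∃ c : Option ℂ, formRank (pencilForm A B c) = pencilRank A B := by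
  have h : pencilRank A B ∈ Set.range (fun l => formRank (pencilForm A B l)) := by
    apply Nat.sSup_mem (Set.range_nonempty _)
      ⟨finrank ℂ V, by rintro x ⟨d, rfl⟩; exact formRank_le_finrank _⟩
  obtain ⟨c, hc⟩ := h
  exact ⟨c, hc⟩

private lemma resForm_injective_rank_ge {C : V →ₗ[ℂ] V →ₗ[ℂ] ℂ} {S : Submodule ℂ V}
    (h : Function.Injective (resForm C S)) : finrank ℂ S ≤ formRank C := by
  have h1 : finrank ℂ (LinearMap.range (resForm C S)) = finrank ℂ S := by
    have := LinearMap.finrank_range_add_finrank_ker (resForm C S)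
    rw [LinearMap.ker_eq_bot.mpr h, finrank_bot] at this
    omega
  have h2 : finrank ℂ (LinearMap.range (resForm C S))
      ≤ finrank ℂ (LinearMap.range ((C : V →ₗ[ℂ] Module.Dual ℂ V) ∘ₗ S.subtype)) := by
    rw [resForm, LinearMap.range_comp]
    apply Submodule.finrank_map_le
  have h3 : finrank ℂ (LinearMap.range ((C : V →ₗ[ℂ] Module.Dual ℂ V) ∘ₗ S.subtype))
      ≤ formRank C := Submodule.finrank_mono (LinearMap.range_comp_le_range _ _)
  omega

open Polynomial in
private lemma fin_bad {A B : V →ₗ[ℂ] V →ₗ[ℂ] ℂ} (hA : A.IsAlt) (hB : B.IsAlt) :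
    {l : ℂ | formRank (A + l • B) ≠ pencilRank A B}.Finite := by
  obtain ⟨c, hc⟩ := pencilRank_attained A B
  set r := pencilRank A B with hr
  set C₀ := pencilForm A B c with hC₀
  have hC₀alt : C₀.IsAlt := by
    cases c with
    | none => exact hB
    | some l => exact fun x => by simp [hC₀, pencilForm, hA x, hB x]
  obtain ⟨S, hcompl⟩ := Submodule.exists_isCompl
    (LinearMap.ker (C₀ : V →ₗ[ℂ] Module.Dual ℂ V))
  have hdimS : finrank ℂ S = r := by
    have h1 := Submodule.finrank_add_eq_of_isCompl hcompl
    have h2 := LinearMap.finrank_range_add_finrank_ker (C₀ : V →ₗ[ℂ] Module.Dual ℂ V)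
    have h3 : finrank ℂ (LinearMap.range (C₀ : V →ₗ[ℂ] Module.Dual ℂ V)) = r := hc
    omega
  have hinj : Function.Injective (resForm C₀ S) := by
    rw [← LinearMap.ker_eq_bot]
    rw [Submodule.eq_bot_iff]
    rintro x hx
    have hx0 : ∀ s : S, C₀ (x : V) (s : V) = 0 := by
      intro s
      have := congrArg (fun φ => φ s) (LinearMap.mem_ker.mp hx)
      simpa [resForm_apply] using this
    have hxV : C₀ (x : V) = 0 := by
      ext v
      obtain ⟨k, hk, s, hs, rfl⟩ := Submodule.mem_sup.mp
        (by rw [hcompl.sup_eq_top]; exact Submodule.mem_top :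
          v ∈ (LinearMap.ker (C₀ : V →ₗ[ℂ] Module.Dual ℂ V)) ⊔ S)
      have hks : C₀ (x:V) k = 0 := by
        rw [← hC₀alt.neg]
        have : C₀ k = 0 := LinearMap.mem_ker.mp hk
        rw [this]
        simp
      simp [map_add, hks, hx0 ⟨s, hs⟩]
    have : (x : V) ∈ (LinearMap.ker (C₀ : V →ₗ[ℂ] Module.Dual ℂ V)) ⊓ S :=
      ⟨LinearMap.mem_ker.mpr hxV, x.2⟩
    rw [hcompl.inf_eq_bot] at this
    exact Subtype.ext (by simpa using this)
  set e := Module.finBasis ℂ S with he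
  set MA := LinearMap.toMatrix e e.dualBasis (resForm A S) with hMA
  set MB := LinearMap.toMatrix e e.dualBasis (resForm B S) with hMB
  set P : ℂ[X] := ((MA.map Polynomial.C) + (X : ℂ[X]) • (MB.map Polynomial.C)).det with hP
  have hdet_inj : ∀ l : ℂ, (MA + l • MB).det ≠ 0 → formRank (A + l • B) = r := by
    intro l hdet
    have htm : LinearMap.toMatrix e e.dualBasis (resForm (A + l • B) S) = MA + l • MB := by
      rw [resForm_pencil, map_add, map_smul, hMA, hMB]
    have hnok : ¬ ∃ x ≠ 0, resForm (A + l • B) S x = 0 := by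
      rw [det_zero_iff_ker' _ e, htm]
      exact hdet
    have hinj' : Function.Injective (resForm (A + l • B) S) := by
      rw [← LinearMap.ker_eq_bot, Submodule.eq_bot_iff]
      intro x hx
      by_contra hne
      exact hnok ⟨x, hne, LinearMap.mem_ker.mp hx⟩
    have h1 := resForm_injective_rank_ge hinj'
    rw [hdimS] at h1
    have h2 := formRank_le_pencilRank A B (some l)
    have h3 : pencilForm A B (some l) = A + l • B := rfl
    rw [h3] at h2
    omega
  have hPeval : ∀ l : ℂ, P.eval l = (MA + l • MB).det := fun l => eval_det_pencil' MA MB l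
  have hPne : P ≠ 0 := by
    cases c with
    | some μ =>
      have hC₀eq : C₀ = A + μ • B := rfl
      intro h0
      have : (MA + μ • MB).det ≠ 0 := by
        have htm : LinearMap.toMatrix e e.dualBasis (resForm C₀ S) = MA + μ • MB := by
          rw [hC₀eq, resForm_pencil, map_add, map_smul, hMA, hMB]
        intro hd
        obtain ⟨x, hx, hfx⟩ := (det_zero_iff_ker' (resForm C₀ S) e).mpr
          (by rw [htm]; exact hd)
        exact hx (hinj (by rw [hfx]; simp))
      rw [← hPeval μ, h0] at this
      simp at this
    | none =>
      have hC₀eq : C₀ = B := rfl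
      have hMBdet : MB.det ≠ 0 := by
        have htm : LinearMap.toMatrix e e.dualBasis (resForm C₀ S) = MB := by
          rw [hC₀eq, hMB]
        intro hd
        obtain ⟨x, hx, hfx⟩ := (det_zero_iff_ker' (resForm C₀ S) e).mpr
          (by rw [htm]; exact hd)
        exact hx (hinj (by rw [hfx]; simp))
      set Q : ℂ[X] := ((MB.map Polynomial.C) + (X : ℂ[X]) • (MA.map Polynomial.C)).det with hQ
      have hQ0 : Q.eval 0 = MB.det := by
        rw [eval_det_pencil']
        simp
      have hQne : Q ≠ 0 := fun h => hMBdet (by rw [← hQ0, h]; simp)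
      have hfin : ({l : ℂ | Q.IsRoot l} ∪ {0}).Finite :=
        (Polynomial.finite_setOf_isRoot hQne).union (Set.finite_singleton 0)
      obtain ⟨μ, hμ⟩ := hfin.infinite_compl.nonempty
      rw [Set.mem_compl_iff, Set.mem_union] at hμ
      push_neg at hμ
      obtain ⟨hμroot, hμ0⟩ := hμ
      have hμ0' : (μ : ℂ) ≠ 0 := fun h => hμ0 (by simpa using h)
      have hQμ : (MB + μ • MA).det ≠ 0 := by
        rw [← eval_det_pencil']
        exact hμroot
      have hmat : MB + μ • MA = μ • (MA + μ⁻¹ • MB) := by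
        rw [smul_add, smul_smul, mul_inv_cancel₀ hμ0', one_smul, add_comm]
      rw [hmat, Matrix.det_smul] at hQμ
      intro h0
      apply hQμ
      rw [← hPeval μ⁻¹, h0]
      simp
  apply Set.Finite.subset (Polynomial.finite_setOf_isRoot hPne)
  intro l hl
  simp only [Set.mem_setOf_eq] at hl ⊢
  by_contra hroot
  apply hl
  apply hdet_inj
  rw [← hPeval l]
  exact hroot

end FinBad

/-! ### Quotient forms -/

private noncomputable def resBil (A : V →ₗ[ℂ] V →ₗ[ℂ] ℂ) (W : Submodule ℂ V) :
    W →ₗ[ℂ] W →ₗ[ℂ] ℂ :=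
  (((A.domRestrict W).flip).domRestrict W).flip

private lemma resBil_apply (A : V →ₗ[ℂ] V →ₗ[ℂ] ℂ) (W : Submodule ℂ V) (x y : W) :
    resBil A W x y = A (x : V) (y : V) := rfl

private lemma quot_h1 (A : V →ₗ[ℂ] V →ₗ[ℂ] ℂ) (W U : Submodule ℂ V)
    (hL : ∀ u ∈ U, ∀ w ∈ W, A u w = 0) :
    U.comap W.subtype ≤ LinearMap.ker (resBil A W) := by
  intro u hu
  rw [LinearMap.mem_ker]
  ext w
  exact hL u (Submodule.mem_comap.mp hu) w w.2

private lemma quot_h2 (A : V →ₗ[ℂ] V →ₗ[ℂ] ℂ) (W U : Submodule ℂ V)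
    (hL : ∀ u ∈ U, ∀ w ∈ W, A u w = 0) (hR : ∀ w ∈ W, ∀ u ∈ U, A w u = 0) :
    U.comap W.subtype ≤ LinearMap.ker
      (LinearMap.flip (Submodule.liftQ (U.comap W.subtype) (resBil A W)
        (quot_h1 A W U hL))) := by
  intro u hu
  rw [LinearMap.mem_ker]
  ext w
  show (resBil A W) w u = 0
  exact hR w w.2 u (Submodule.mem_comap.mp hu)

private noncomputable def quotForm (A : V →ₗ[ℂ] V →ₗ[ℂ] ℂ) (W : Submodule ℂ V)
    (U : Submodule ℂ V)
    (hL : ∀ u ∈ U, ∀ w ∈ W, A u w = 0) (hR : ∀ w ∈ W, ∀ u ∈ U, A w u = 0) :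
    (W ⧸ U.comap W.subtype) →ₗ[ℂ] (W ⧸ U.comap W.subtype) →ₗ[ℂ] ℂ :=
  LinearMap.flip (Submodule.liftQ (U.comap W.subtype)
    (LinearMap.flip (Submodule.liftQ (U.comap W.subtype) (resBil A W) (quot_h1 A W U hL)))
    (quot_h2 A W U hL hR))

private lemma quotForm_apply (A : V →ₗ[ℂ] V →ₗ[ℂ] ℂ) (W U : Submodule ℂ V) (hL hR) (w w' : W) :
    quotForm A W U hL hR (Submodule.Quotient.mk w) (Submodule.Quotient.mk w')
      = A (w : V) (w' : V) := rfl

/-! ### Pieces of the main argument -/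

section Main
variable [FiniteDimensional ℂ V]

private lemma le_orthComp_of_biIsotropic {A B : V →ₗ[ℂ] V →ₗ[ℂ] ℂ} {U : Submodule ℂ V}
    (hbi : biIsotropic A B U) (l : ℂ) : U ≤ orthComp (A + l • B) U := by
  intro x hx
  rw [mem_orthComp']
  intro u hu
  have := hbi u hu x hx
  simp [this.1, this.2]

private lemma orthComp_sup_span (C : V →ₗ[ℂ] V →ₗ[ℂ] ℂ) (U : Submodule ℂ V) (v : V) :
    orthComp C (U ⊔ Submodule.span ℂ {v}) = orthComp C U ⊓ LinearMap.ker (C v) := by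
  ext x
  rw [Submodule.mem_inf, mem_orthComp', mem_orthComp', LinearMap.mem_ker]
  constructor
  · intro h
    refine ⟨fun u hu => h u (Submodule.mem_sup_left hu), ?_⟩
    exact h v (Submodule.mem_sup_right (Submodule.mem_span_singleton_self v))
  · rintro ⟨h1, h2⟩ u hu
    obtain ⟨y, hy, z, hz, rfl⟩ := Submodule.mem_sup.mp hu
    obtain ⟨t, rfl⟩ := Submodule.mem_span_singleton.mp hz
    simp [map_add, h1 y hy, h2]

private lemma dim_bound_of_biIsotropic {A B : V →ₗ[ℂ] V →ₗ[ℂ] ℂ}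
    (hA : A.IsAlt) (hB : B.IsAlt) {U' : Submodule ℂ V} (hbi : biIsotropic A B U') :
    2 * finrank ℂ U' + pencilRank A B ≤ 2 * finrank ℂ V := by
  obtain ⟨c, hc⟩ := pencilRank_attained A B
  set C₀ := pencilForm A B c with hC₀
  have hU'le : U' ≤ LinearMap.ker
      ((U'.subtype.dualMap : Module.Dual ℂ V →ₗ[ℂ] Module.Dual ℂ U') ∘ₗ C₀) := by
    intro x hx
    rw [LinearMap.mem_ker]
    ext u
    have h1 := hbi x hx u u.2
    cases c with
    | none => simpa [hC₀, pencilForm] using h1.2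
    | some l =>
      show (A + l • B) x (u : V) = 0
      simp [h1.1, h1.2]
  have hrn := LinearMap.finrank_range_add_finrank_ker
    ((U'.subtype.dualMap : Module.Dual ℂ V →ₗ[ℂ] Module.Dual ℂ U') ∘ₗ
      (C₀ : V →ₗ[ℂ] Module.Dual ℂ V))
  have hklei : finrank ℂ U' ≤ finrank ℂ (LinearMap.ker
      ((U'.subtype.dualMap : Module.Dual ℂ V →ₗ[ℂ] Module.Dual ℂ U') ∘ₗ C₀)) :=
    Submodule.finrank_mono hU'le
  have hlow : finrank ℂ (LinearMap.range (C₀ : V →ₗ[ℂ] Module.Dual ℂ V))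
      ≤ finrank ℂ (LinearMap.range
          ((U'.subtype.dualMap : Module.Dual ℂ V →ₗ[ℂ] Module.Dual ℂ U') ∘ₗ C₀))
        + finrank ℂ (LinearMap.ker
          (U'.subtype.dualMap : Module.Dual ℂ V →ₗ[ℂ] Module.Dual ℂ U')) := by
    rw [LinearMap.range_comp]
    exact finrank_le_map_add_ker' _ _
  have hkd := finrank_ker_dualMap_subtype' U'
  have hcrk : finrank ℂ (LinearMap.range (C₀ : V →ₗ[ℂ] Module.Dual ℂ V))
      = pencilRank A B := hc
  omega

private lemma orthComp_eq_self_of_rank {A B : V →ₗ[ℂ] V →ₗ[ℂ] ℂ}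
    (hA : A.IsAlt) (hB : B.IsAlt) {U : Submodule ℂ V}
    (hbi : biIsotropic A B U)
    (hdim : 2 * finrank ℂ U + pencilRank A B = 2 * finrank ℂ V)
    (l : ℂ) (hl : formRank (A + l • B) = pencilRank A B) :
    orthComp (A + l • B) U = U := by
  have halt := pencil_alt' hA hB l
  have hUle := le_orthComp_of_biIsotropic hbi l
  rw [orthComp_eq_ker' halt] at hUle ⊢
  have hrn := LinearMap.finrank_range_add_finrank_ker
    ((U.subtype.dualMap : Module.Dual ℂ V →ₗ[ℂ] Module.Dual ℂ U) ∘ₗ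
      ((A + l • B) : V →ₗ[ℂ] Module.Dual ℂ V))
  have hlow : finrank ℂ (LinearMap.range ((A + l • B) : V →ₗ[ℂ] Module.Dual ℂ V))
      ≤ finrank ℂ (LinearMap.range
          ((U.subtype.dualMap : Module.Dual ℂ V →ₗ[ℂ] Module.Dual ℂ U) ∘ₗ (A + l • B)))
        + finrank ℂ (LinearMap.ker
          (U.subtype.dualMap : Module.Dual ℂ V →ₗ[ℂ] Module.Dual ℂ U)) := by
    rw [LinearMap.range_comp]
    exact finrank_le_map_add_ker' _ _
  have hkd := finrank_ker_dualMap_subtype' U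
  have hcrk : finrank ℂ (LinearMap.range ((A + l • B) : V →ₗ[ℂ] Module.Dual ℂ V))
      = pencilRank A B := hl
  refine (Submodule.eq_of_le_of_finrank_le hUle ?_).symm
  omega

end Main

/-- A subspace `U` is bi-Lagrangian w.r.t. the pencil
`{A + λB}` (bi-isotropic and `dim U = dim V − (1/2)·rk 𝓛`, encoded as
`2·dim U + rk 𝓛 = 2·dim V`) if and only if `U` is bi-isotropic, admissible,
and maximal with respect to inclusion among bi-isotropic admissible
subspaces. -/
theorem statement_6 [FiniteDimensional ℂ V]
    (A B : V →ₗ[ℂ] V →ₗ[ℂ] ℂ) (hAalt : A.IsAlt) (hBalt : B.IsAlt)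
    (U : Submodule ℂ V) :
    (biIsotropic A B U ∧ 2 * finrank ℂ U + pencilRank A B = 2 * finrank ℂ V) ↔
      (biIsotropic A B U ∧ IsAdmissible A B U ∧
        ∀ U' : Submodule ℂ V, biIsotropic A B U' → IsAdmissible A B U' →
          U ≤ U' → U' = U) := by
  constructor
  · rintro ⟨hbi, hdim⟩
    refine ⟨hbi, ⟨U, ?_⟩, ?_⟩
    · -- admissibility, with witness U itself
      apply Set.Finite.subset (fin_bad hAalt hBalt)
      intro l hl
      simp only [Set.mem_setOf_eq] at hl ⊢
      intro hrk
      exact hl (orthComp_eq_self_of_rank hAalt hBalt hbi hdim l hrk)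
    · -- maximality
      intro U' hbi' _ hle
      have hb := dim_bound_of_biIsotropic hAalt hBalt hbi'
      exact (Submodule.eq_of_le_of_finrank_le hle (by omega)).symm
  · rintro ⟨hbi, ⟨W, hWfin⟩, hmax⟩
    refine ⟨hbi, ?_⟩
    set r := pencilRank A B with hr
    have hBadfin : ({l : ℂ | orthComp (A + l • B) U ≠ W} ∪
        {l : ℂ | formRank (A + l • B) ≠ r}).Finite :=
      hWfin.union (fin_bad hAalt hBalt)
    have hGinf : Set.Infinite ({l : ℂ | orthComp (A + l • B) U ≠ W} ∪
        {l : ℂ | formRank (A + l • B) ≠ r})ᶜ := hBadfin.infinite_compl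
    obtain ⟨l₁, hl₁⟩ := hGinf.nonempty
    obtain ⟨l₂, hl₂, hl₂mem⟩ := (hGinf.diff (Set.finite_singleton l₁)).nonempty
    have hl₂ne : l₂ ≠ l₁ := fun h => hl₂mem (by simp [h])
    rw [Set.mem_compl_iff, Set.mem_union] at hl₁ hl₂
    push_neg at hl₁ hl₂
    simp only [Set.mem_setOf_eq, not_not] at hl₁ hl₂
    obtain ⟨hOC₁, hRk₁⟩ := hl₁
    obtain ⟨hOC₂, hRk₂⟩ := hl₂
    -- U ≤ W
    have hUW : U ≤ W := by
      rw [← hOC₁]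
      exact le_orthComp_of_biIsotropic hbi l₁
    -- orthogonality between W and U for both forms
    have hWU : ∀ w ∈ W, ∀ u ∈ U, A u w = 0 ∧ B u w = 0 := by
      intro w hw u hu
      have h1 : A u w + l₁ * B u w = 0 := by
        have := mem_orthComp'.mp (hOC₁ ▸ hw : w ∈ orthComp (A + l₁ • B) U) u hu
        simpa using this
      have h2 : A u w + l₂ * B u w = 0 := by
        have := mem_orthComp'.mp (hOC₂ ▸ hw : w ∈ orthComp (A + l₂ • B) U) u hu
        simpa using this
      have hB0 : B u w = 0 := by
        have h3 : (l₁ - l₂) * B u w = 0 := by linear_combination h1 - h2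
        rcases mul_eq_zero.mp h3 with h | h
        · exact absurd (sub_eq_zero.mp h).symm hl₂ne
        · exact h
      constructor
      · have := h1; rw [hB0] at this; simpa using this
      · exact hB0
    have hWU' : ∀ w ∈ W, ∀ u ∈ U, A w u = 0 ∧ B w u = 0 := by
      intro w hw u hu
      obtain ⟨h1, h2⟩ := hWU w hw u hu
      constructor
      · rw [← hAalt.neg u w, h1, neg_zero]
      · rw [← hBalt.neg u w, h2, neg_zero]
    by_cases hWeqU : W = U
    · -- dimension count
      subst hWeqU
      have halt := pencil_alt' hAalt hBalt l₁
      have hker : LinearMap.ker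
          ((W.subtype.dualMap : Module.Dual ℂ V →ₗ[ℂ] Module.Dual ℂ W) ∘ₗ (A + l₁ • B)) = W := by
        rw [← orthComp_eq_ker' halt]
        exact hOC₁
      -- the radical is contained in W
      have hKW : LinearMap.ker ((A + l₁ • B) : V →ₗ[ℂ] Module.Dual ℂ V) ≤ W := by
        intro x hx
        rw [← hker, LinearMap.mem_ker]
        rw [LinearMap.mem_ker] at hx
        rw [LinearMap.comp_apply, hx]
        simp
      have hrnS := LinearMap.finrank_range_add_finrank_ker
        ((W.subtype.dualMap : Module.Dual ℂ V →ₗ[ℂ] Module.Dual ℂ W) ∘ₗ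
          ((A + l₁ • B) : V →ₗ[ℂ] Module.Dual ℂ V))
      rw [hker] at hrnS
      have hTR := transpose_rank' halt W
      have hrnT := LinearMap.finrank_range_add_finrank_ker
        (((A + l₁ • B) : V →ₗ[ℂ] Module.Dual ℂ V) ∘ₗ W.subtype)
      have hkerT : LinearMap.ker (((A + l₁ • B) : V →ₗ[ℂ] Module.Dual ℂ V) ∘ₗ W.subtype)
          = (LinearMap.ker ((A + l₁ • B) : V →ₗ[ℂ] Module.Dual ℂ V)).comap W.subtype := by
        ext x
        simp [LinearMap.mem_ker, Submodule.mem_comap]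
      have hkerTfr : finrank ℂ (LinearMap.ker
          (((A + l₁ • B) : V →ₗ[ℂ] Module.Dual ℂ V) ∘ₗ W.subtype))
          = finrank ℂ (LinearMap.ker ((A + l₁ • B) : V →ₗ[ℂ] Module.Dual ℂ V)) := by
        rw [hkerT]
        exact LinearEquiv.finrank_eq (Submodule.comapSubtypeEquivOfLe hKW)
      have hrnC := LinearMap.finrank_range_add_finrank_ker
        ((A + l₁ • B) : V →ₗ[ℂ] Module.Dual ℂ V)
      have hcrk : finrank ℂ (LinearMap.range ((A + l₁ • B) : V →ₗ[ℂ] Module.Dual ℂ V))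
          = r := hRk₁
      omega
    · -- W ≠ U : extend U, contradicting maximality
      exfalso
      have hU₀ : U.comap W.subtype ≠ ⊤ := by
        intro h
        apply hWeqU
        apply le_antisymm _ hUW
        intro w hw
        have : (⟨w, hw⟩ : W) ∈ U.comap W.subtype := by rw [h]; trivial
        exact Submodule.mem_comap.mp this
      have : Nontrivial (W ⧸ U.comap W.subtype) :=
        Submodule.Quotient.nontrivial_iff.mpr hU₀
      have hq : 1 ≤ finrank ℂ (W ⧸ U.comap W.subtype) := finrank_pos
      set Aq := quotForm A W U (fun u hu w hw => (hWU w hw u hu).1)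
        (fun w hw u hu => (hWU' w hw u hu).1) with hAq
      set Bq := quotForm B W U (fun u hu w hw => (hWU w hw u hu).2)
        (fun w hw u hu => (hWU' w hw u hu).2) with hBq
      obtain ⟨a, b, x, hab, hx, hker⟩ := keyLemma' hq Aq Bq
      obtain ⟨w, rfl⟩ := Submodule.Quotient.mk_surjective _ x
      have hvW : (w : V) ∈ W := w.2
      have hvU : (w : V) ∉ U := by
        intro h
        apply hx
        rw [Submodule.Quotient.mk_eq_zero]
        exact Submodule.mem_comap.mpr h
      -- the relation on W
      have hrel : ∀ z ∈ W, a * A (w : V) z + b * B (w : V) z = 0 := by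
        intro z hz
        have := congrArg (fun φ => φ (Submodule.Quotient.mk (⟨z, hz⟩ : W))) hker
        simpa [hAq, hBq, quotForm_apply, smul_eq_mul] using this
      set v := (w : V) with hv
      set U' := U ⊔ Submodule.span ℂ {v} with hU'
      have hbi' : biIsotropic A B U' := by
        intro x hx y hy
        obtain ⟨x₁, hx₁, x₂, hx₂, rfl⟩ := Submodule.mem_sup.mp hx
        obtain ⟨s, rfl⟩ := Submodule.mem_span_singleton.mp hx₂
        obtain ⟨y₁, hy₁, y₂, hy₂, rfl⟩ := Submodule.mem_sup.mp hy
        obtain ⟨t, rfl⟩ := Submodule.mem_span_singleton.mp hy₂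
        obtain ⟨hA1, hB1⟩ := hbi x₁ hx₁ y₁ hy₁
        obtain ⟨hA2, hB2⟩ := hWU v hvW x₁ hx₁   -- A x₁ v = 0, B x₁ v = 0
        obtain ⟨hA3, hB3⟩ := hWU' v hvW y₁ hy₁  -- A v y₁ = 0, B v y₁ = 0
        constructor
        · simp [map_add, map_smul, hA1, hA2, hA3, hAalt v]
        · simp [map_add, map_smul, hB1, hB2, hB3, hBalt v]
      have hadm' : IsAdmissible A B U' := by
        refine ⟨(W ⊓ LinearMap.ker (A v)) ⊓ LinearMap.ker (B v), ?_⟩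
        have hsf : ({l : ℂ | b - l * a = 0}).Finite := by
          by_cases ha : a = 0
          · have hbne : b ≠ 0 := fun h => hab ⟨ha, h⟩
            convert Set.finite_empty
            ext l
            simp [ha, hbne]
          · apply Set.Finite.subset (Set.finite_singleton (b / a))
            intro l hl
            simp only [Set.mem_setOf_eq] at hl
            rw [Set.mem_singleton_iff]
            field_simp
            linear_combination -hl
        apply Set.Finite.subset (hBadfin.union hsf)
        intro l hl
        simp only [Set.mem_setOf_eq] at hl
        rw [Set.mem_union, Set.mem_union]
        by_contra hcon
        push_neg at hcon
        obtain ⟨⟨hOC, hRk⟩, hba⟩ := hcon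
        simp only [Set.mem_setOf_eq, not_not] at hOC hRk hba
        apply hl
        rw [hU', orthComp_sup_span, hOC]
        ext z
        simp only [Submodule.mem_inf, LinearMap.mem_ker]
        constructor
        · rintro ⟨hzW, hzk⟩
          have hzk' : A v z + l * B v z = 0 := by simpa using hzk
          have hr2 := hrel z hzW
          have hBz : B v z = 0 := by
            have h3 : (b - l * a) * B v z = 0 := by linear_combination hr2 - a * hzk'
            rcases mul_eq_zero.mp h3 with h | h
            · exact absurd h hba
            · exact h
          have hAz : A v z = 0 := by
            rw [hBz] at hzk'; simpa using hzk'
          exact ⟨⟨hzW, hAz⟩, hBz⟩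
        · rintro ⟨⟨hzW, hAz⟩, hBz⟩
          refine ⟨hzW, ?_⟩
          simp [hAz, hBz]
      have := hmax U' hbi' hadm' le_sup_left
      apply hvU
      rw [← this, hU']
      exact Submodule.mem_sup_right (Submodule.mem_span_singleton_self v)
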